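/- Work in a monster model of a complete first-order theory T without the order property. Finite-satisfiability independence over models is symmetric: for any model M and tuples ā, b̄, if tp(ā/M b̄) is finitely satisfiable in M, then tp(b̄/M ā) is finitely satisfiable in M. -/

import Mathlib

open FirstOrder Cardinal

universe u v

variable {L : FirstOrder.Language.{u, u}} {M : Type u} [L.Structure M]

/-- Two tuples have the same type over a parameter set `A` (in the ambient structure `M`,
thought of as a monster model): they satisfy the same formulas with parameters from `A`. -/
def SameTypeOver (L : FirstOrder.Language.{u, u}) {M : Type u} [L.Structure M] (A : Set M) {α : Type v} (a b : α → M) : Prop :=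
  ∀ (n : ℕ) (φ : L.Formula (α ⊕ Fin n)) (c : Fin n → M), (∀ i, c i ∈ A) →
    (φ.Realize (Sum.elim a c) ↔ φ.Realize (Sum.elim b c))

/-- `a ⫝_N B` : the type `tp(a / N ∪ B)` is finitely satisfiable in `N`: every formula with
parameters from `N ∪ B` satisfied by `a` is satisfied by a tuple from `N`. -/
def FinSatIndep (L : FirstOrder.Language.{u, u}) {M : Type u} [L.Structure M] (N : Set M) {α : Type v} (a : α → M) (B : Set M) : Prop :=
  ∀ (n : ℕ) (φ : L.Formula (α ⊕ Fin n)) (c : Fin n → M), (∀ i, c i ∈ N ∪ B) →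
    φ.Realize (Sum.elim a c) →
      ∃ a' : α → M, (∀ i, a' i ∈ N) ∧ φ.Realize (Sum.elim a' c)

/-- The structure `M` has the order property: some formula orders an infinite sequence
of finite tuples. -/
def HasOrderProp (L : FirstOrder.Language.{u, u}) (M : Type u) [L.Structure M] : Prop :=
  ∃ (k : ℕ) (φ : L.Formula (Fin k ⊕ Fin k)) (a : ℕ → Fin k → M),
    ∀ i j : ℕ, φ.Realize (Sum.elim (a i) (a j)) ↔ i < j

/-- An abstract complete type over `B ⊆ M` in variables `α`, represented as a set of
formula/parameter pairs: parameters come from `B`, every finite subset is realized in `M`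
(equivalently, the type is consistent with the elementary diagram of `M`), and the set is
complete (contains each formula over `B` or its negation). -/
def IsCompleteTypeOn (α : Type v) (B : Set M)
    (p : Set (Σ n : ℕ, L.Formula (α ⊕ Fin n) × (Fin n → M))) : Prop :=
  (∀ q ∈ p, ∀ i, q.2.2 i ∈ B) ∧
  (∀ s : Finset (Σ n : ℕ, L.Formula (α ⊕ Fin n) × (Fin n → M)), ↑s ⊆ p →
    ∃ a : α → M, ∀ q ∈ s, q.2.1.Realize (Sum.elim a q.2.2)) ∧
  (∀ (n : ℕ) (φ : L.Formula (α ⊕ Fin n)) (c : Fin n → M), (∀ i, c i ∈ B) →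
    (⟨n, (φ, c)⟩ ∈ p ∨ ⟨n, (φ.not, c)⟩ ∈ p))

section AuxSym

variable {L : FirstOrder.Language.{u, u}} {M : Type u} [L.Structure M]

open FirstOrder.Language

/-- Finite conjunction indexed by a finset. -/
private noncomputable def finIInf {α : Type*} {β : Type*} {n : ℕ} (s : Finset β)
    (f : β → L.BoundedFormula α n) : L.BoundedFormula α n :=
  FirstOrder.Language.BoundedFormula.iInf (fun x : s => f x)

/-- Realization of a finite conjunction of formulas. -/
private lemma realize_formula_iInf {α : Type*} {β : Type*} (s : Finset β)
    (f : β → L.Formula α) (v : α → M) :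
    Formula.Realize (finIInf s f) v ↔
      ∀ x ∈ s, (f x).Realize v := by
  unfold finIInf Formula.Realize
  rw [FirstOrder.Language.BoundedFormula.realize_iInf]
  exact ⟨fun h x hx => h ⟨x, hx⟩, fun h x => h x.1 x.2⟩

/-- Finite satisfiability applies to formulas with parameters indexed by any fintype. -/
private lemma finSatIndep_param {N : Set M} {B : Set M} {k : ℕ} {a : Fin k → M}
    (h : FinSatIndep L N a B) {β : Type u} [Fintype β]
    (φ : L.Formula (Fin k ⊕ β)) (c : β → M) (hc : ∀ i, c i ∈ N ∪ B)
    (hr : φ.Realize (Sum.elim a c)) :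
    ∃ a' : Fin k → M, (∀ i, a' i ∈ N) ∧ φ.Realize (Sum.elim a' c) := by
  classical
  let e := Fintype.equivFin β
  have hcomp : ∀ x : Fin k → M,
      Sum.elim x (c ∘ e.symm) ∘ Sum.map id ⇑e = Sum.elim x c := by
    intro x; funext z
    rcases z with i | j
    · rfl
    · simp
  obtain ⟨a', ha', hra'⟩ := h (Fintype.card β) (φ.relabel (Sum.map id ⇑e)) (c ∘ e.symm)
    (fun i => hc _) (by rw [Formula.realize_relabel, hcomp]; exact hr)
  exact ⟨a', ha', by rwa [Formula.realize_relabel, hcomp] at hra'⟩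

/-- If a formula with parameters from an elementary substructure has a realization in `M`,
it has one with coordinates in the substructure. -/
private lemma exists_tuple_in_substructure (S : L.ElementarySubstructure M)
    {l : ℕ} {β : Type u} [Fintype β]
    (θ : L.Formula (Fin l ⊕ β)) (c : β → M) (hc : ∀ i, c i ∈ (S : Set M))
    (w : Fin l → M) (hw : θ.Realize (Sum.elim w c)) :
    ∃ w' : Fin l → M, (∀ i, w' i ∈ (S : Set M)) ∧ θ.Realize (Sum.elim w' c) := by
  classical
  let f : (Fin l ⊕ β) → β ⊕ Fin l := Sum.elim Sum.inr Sum.inl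
  let ζ : L.Formula β := (θ.relabel f).iExs (Fin l)
  have helim : ∀ {W : Type u} (ww : Fin l → W) (vv : β → W),
      Sum.elim vv ww ∘ f = Sum.elim ww vv := by
    intro W ww vv; funext z; rcases z with i | j <;> rfl
  have h1 : ζ.Realize c := by
    rw [Formula.realize_iExs]
    simp only [Formula.realize_relabel]
    exact ⟨w, by rw [helim]; exact hw⟩
  let cS : β → S := fun i => ⟨c i, hc i⟩
  have hcS : ((↑) : S → M) ∘ cS = c := rfl
  have h2 : ζ.Realize cS := by
    rw [← S.subtype.map_formula ζ cS]
    have : ⇑S.subtype ∘ cS = c := rfl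
    rw [this]
    exact h1
  rw [Formula.realize_iExs] at h2
  simp only [Formula.realize_relabel] at h2
  obtain ⟨wS, hwS⟩ := h2
  rw [helim] at hwS
  refine ⟨((↑) : S → M) ∘ wS, fun i => (wS i).2, ?_⟩
  have hmap := S.subtype.map_formula θ (Sum.elim wS cS)
  have hco : ⇑S.subtype ∘ Sum.elim wS cS = Sum.elim (((↑) : S → M) ∘ wS) c := by
    funext z; rcases z with i | j <;> rfl
  rw [hco] at hmap
  exact hmap.mpr hwS

/-- The basic binary relation used in the construction. -/
private def QR {k l n : ℕ} (Φ : L.Formula ((Fin l ⊕ Fin k) ⊕ Fin n)) (c : Fin n → M)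
    (u : Fin k → M) (v : Fin l → M) : Prop :=
  Φ.Realize (Sum.elim (Sum.elim v u) c)

private theorem aux_core
    (hNOP : ¬ HasOrderProp L M) (S : L.ElementarySubstructure M)
    {k l n : ℕ} (a : Fin k → M) (b : Fin l → M)
    (h : FinSatIndep L (S : Set M) a (Set.range b))
    (Φ : L.Formula ((Fin l ⊕ Fin k) ⊕ Fin n)) (c : Fin n → M)
    (hc : ∀ i, c i ∈ (S : Set M))
    (hab : Φ.Realize (Sum.elim (Sum.elim b a) c))
    (hno : ∀ v : Fin l → M, (∀ i, v i ∈ (S : Set M)) →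
      ¬ Φ.Realize (Sum.elim (Sum.elim v a) c)) : False := by
  classical
  let P : (Fin k → M) × (Fin l → M) → Prop := fun x =>
    (∀ i, x.1 i ∈ (S : Set M)) ∧ (∀ i, x.2 i ∈ (S : Set M)) ∧
      QR Φ c x.1 b ∧ QR Φ c x.1 x.2
  let r : (Fin k → M) × (Fin l → M) → (Fin k → M) × (Fin l → M) → Prop := fun x y =>
    ¬ QR Φ c y.1 x.2 ∧ QR Φ c x.1 y.2
  have main : ∀ s : Finset ((Fin k → M) × (Fin l → M)),
      (∀ x ∈ s, P x) → ∃ y, P y ∧ ∀ x ∈ s, r x y := by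
    intro s hsP
    -- Step A : find a' in S with QR a' b and ¬ QR a' x.2 for x ∈ s
    let β : Type u := (Fin n ⊕ Fin l) ⊕ ({x // x ∈ s} × Fin l)
    let ρb : (Fin l ⊕ Fin k) ⊕ Fin n → Fin k ⊕ β := fun z =>
      match z with
      | .inl (.inl j) => .inr (.inl (.inr j))
      | .inl (.inr i) => .inl i
      | .inr t => .inr (.inl (.inl t))
    let ρv : {x // x ∈ s} → ((Fin l ⊕ Fin k) ⊕ Fin n → Fin k ⊕ β) := fun q z =>
      match z with
      | .inl (.inl j) => .inr (.inr (q, j))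
      | .inl (.inr i) => .inl i
      | .inr t => .inr (.inl (.inl t))
    let pv : β → M := fun z =>
      match z with
      | .inl (.inl t) => c t
      | .inl (.inr j) => b j
      | .inr qj => qj.1.1.2 qj.2
    have hcompb : ∀ u : Fin k → M, Sum.elim u pv ∘ ρb = Sum.elim (Sum.elim b u) c := by
      intro u; funext z; rcases z with (j | i) | t <;> rfl
    have hcompv : ∀ (u : Fin k → M) (q : {x // x ∈ s}),
        Sum.elim u pv ∘ ρv q = Sum.elim (Sum.elim q.1.2 u) c := by
      intro u q; funext z; rcases z with (j | i) | t <;> rfl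
    have hΨ : ∀ u : Fin k → M,
        Formula.Realize ((Φ.relabel ρb) ⊓ finIInf s.attach
          (fun q => (Φ.relabel (ρv q)).not)) (Sum.elim u pv) ↔
        (QR Φ c u b ∧ ∀ x ∈ s, ¬ QR Φ c u x.2) := by
      intro u
      rw [Formula.realize_inf, realize_formula_iInf, Formula.realize_relabel, hcompb]
      constructor
      · rintro ⟨h1, h2⟩
        refine ⟨h1, fun x hx hQ => ?_⟩
        have := h2 ⟨x, hx⟩ (Finset.mem_attach _ _)
        rw [Formula.realize_not, Formula.realize_relabel, hcompv] at this
        exact this hQ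
      · rintro ⟨h1, h2⟩
        refine ⟨h1, fun q _ => ?_⟩
        rw [Formula.realize_not, Formula.realize_relabel, hcompv]
        exact h2 q.1 q.2
    obtain ⟨a', ha'S, ha'r⟩ := finSatIndep_param h
      ((Φ.relabel ρb) ⊓ finIInf s.attach
          (fun q => (Φ.relabel (ρv q)).not)) pv
      (by
        rintro ((t | j) | ⟨q, j⟩)
        · exact Or.inl (hc t)
        · exact Or.inr ⟨j, rfl⟩
        · exact Or.inl ((hsP q.1 q.2).2.1 j))
      (by
        rw [hΨ]
        exact ⟨hab, fun x hx => hno x.2 (hsP x hx).2.1⟩)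
    have ha'Q : QR Φ c a' b ∧ ∀ x ∈ s, ¬ QR Φ c a' x.2 := (hΨ a').mp ha'r
    -- Step B : find b'' in S with QR a' b'' and QR x.1 b'' for x ∈ s
    let γ : Type u := (Fin n ⊕ Fin k) ⊕ ({x // x ∈ s} × Fin k)
    let σa : (Fin l ⊕ Fin k) ⊕ Fin n → Fin l ⊕ γ := fun z =>
      match z with
      | .inl (.inl j) => .inl j
      | .inl (.inr i) => .inr (.inl (.inr i))
      | .inr t => .inr (.inl (.inl t))
    let σq : {x // x ∈ s} → ((Fin l ⊕ Fin k) ⊕ Fin n → Fin l ⊕ γ) := fun q z =>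
      match z with
      | .inl (.inl j) => .inl j
      | .inl (.inr i) => .inr (.inr (q, i))
      | .inr t => .inr (.inl (.inl t))
    let pw : γ → M := fun z =>
      match z with
      | .inl (.inl t) => c t
      | .inl (.inr i) => a' i
      | .inr qi => qi.1.1.1 qi.2
    have hcompa : ∀ w : Fin l → M, Sum.elim w pw ∘ σa = Sum.elim (Sum.elim w a') c := by
      intro w; funext z; rcases z with (j | i) | t <;> rfl
    have hcompq : ∀ (w : Fin l → M) (q : {x // x ∈ s}),
        Sum.elim w pw ∘ σq q = Sum.elim (Sum.elim w q.1.1) c := by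
      intro w q; funext z; rcases z with (j | i) | t <;> rfl
    have hΘ : ∀ w : Fin l → M,
        Formula.Realize ((Φ.relabel σa) ⊓ finIInf s.attach
          (fun q => Φ.relabel (σq q))) (Sum.elim w pw) ↔
        (QR Φ c a' w ∧ ∀ x ∈ s, QR Φ c x.1 w) := by
      intro w
      rw [Formula.realize_inf, realize_formula_iInf, Formula.realize_relabel, hcompa]
      constructor
      · rintro ⟨h1, h2⟩
        refine ⟨h1, fun x hx => ?_⟩
        have := h2 ⟨x, hx⟩ (Finset.mem_attach _ _)
        rwa [Formula.realize_relabel, hcompq] at this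
      · rintro ⟨h1, h2⟩
        refine ⟨h1, fun q _ => ?_⟩
        rw [Formula.realize_relabel, hcompq]
        exact h2 q.1 q.2
    obtain ⟨b'', hb''S, hb''r⟩ := exists_tuple_in_substructure S
      ((Φ.relabel σa) ⊓ finIInf s.attach
          (fun q => Φ.relabel (σq q))) pw
      (by
        rintro ((t | i) | ⟨q, i⟩)
        · exact hc t
        · exact ha'S i
        · exact (hsP q.1 q.2).1 i)
      b
      (by
        rw [hΘ]
        exact ⟨ha'Q.1, fun x hx => (hsP x hx).2.2.1⟩)
    have hb''Q : QR Φ c a' b'' ∧ ∀ x ∈ s, QR Φ c x.1 b'' := (hΘ b'').mp hb''r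
    exact ⟨(a', b''), ⟨ha'S, hb''S, ha'Q.1, hb''Q.1⟩,
      fun x hx => ⟨ha'Q.2 x hx, hb''Q.2 x hx⟩⟩
  obtain ⟨f, hfP, hfr⟩ := exists_seq_of_forall_finset_exists P r main
  have key : ∀ i j : ℕ, QR Φ c (f i).1 (f j).2 ↔ i ≤ j := by
    intro i j
    constructor
    · intro hQ
      by_contra hij
      exact (hfr j i (not_le.mp hij)).1 hQ
    · intro hij
      rcases eq_or_lt_of_le hij with rfl | hlt
      · exact (hfP i).2.2.2
      · exact (hfr i j hlt).2
  apply hNOP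
  let E : ((Fin k ⊕ Fin l) ⊕ Fin n) ≃ Fin (k + l + n) :=
    (Equiv.sumCongr finSumFinEquiv (Equiv.refl (Fin n))).trans finSumFinEquiv
  let ρχ : ((Fin l ⊕ Fin k) ⊕ Fin n) → Fin (k + l + n) ⊕ Fin (k + l + n) := fun z =>
    match z with
    | .inl (.inl j) => .inl (E (.inl (.inr j)))
    | .inl (.inr i) => .inr (E (.inl (.inl i)))
    | .inr t => .inl (E (.inr t))
  let seq : ℕ → Fin (k + l + n) → M := fun i =>
    (Sum.elim (Sum.elim (f i).1 (f i).2) c) ∘ E.symm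
  refine ⟨k + l + n, Φ.not.relabel ρχ, seq, fun i j => ?_⟩
  rw [Formula.realize_relabel, Formula.realize_not]
  have hcomp : Sum.elim (seq i) (seq j) ∘ ρχ = Sum.elim (Sum.elim (f i).2 (f j).1) c := by
    funext z
    rcases z with (j' | i') | t
    · show seq i (E (.inl (.inr j'))) = (f i).2 j'
      show (Sum.elim (Sum.elim (f i).1 (f i).2) c) (E.symm (E (.inl (.inr j')))) = _
      rw [Equiv.symm_apply_apply]
      rfl
    · show seq j (E (.inl (.inl i'))) = (f j).1 i'
      show (Sum.elim (Sum.elim (f j).1 (f j).2) c) (E.symm (E (.inl (.inl i')))) = _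
      rw [Equiv.symm_apply_apply]
      rfl
    · show seq i (E (.inr t)) = c t
      show (Sum.elim (Sum.elim (f i).1 (f i).2) c) (E.symm (E (.inr t))) = _
      rw [Equiv.symm_apply_apply]
      rfl
  rw [hcomp]
  rw [show Φ.Realize (Sum.elim (Sum.elim (f i).2 (f j).1) c) ↔ j ≤ i from key j i]
  exact not_le

end AuxSym
/-- Symmetry of finite-satisfiability independence over models, in a theory without the
order property: if `tp(ā / M b̄)` is finitely satisfiable in the model `M`, then so is
`tp(b̄ / M ā)`. -/
theorem stmt14 (L : FirstOrder.Language.{u, u}) (M : Type u) [L.Structure M] [Infinite M]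
    (hNOP : ¬ HasOrderProp L M)
    (S : L.ElementarySubstructure M) {k l : ℕ} (a : Fin k → M) (b : Fin l → M)
    (h : FinSatIndep L (S : Set M) a (Set.range b)) :
    FinSatIndep L (S : Set M) b (Set.range a) := by
  classical
  by_contra hfail
  unfold FinSatIndep at hfail
  push_neg at hfail
  obtain ⟨n, φ, c0, hc0, hbc0, hnb⟩ := hfail
  obtain ⟨s0⟩ : Nonempty S := inferInstance
  have hrange : ∀ i, c0 i ∉ (S : Set M) → c0 i ∈ Set.range a := fun i hi =>
    ((Set.mem_union _ _ _).mp (hc0 i)).resolve_left hi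
  let ρ0 : Fin l ⊕ Fin n → (Fin l ⊕ Fin k) ⊕ Fin n := fun x =>
    match x with
    | .inl j => .inl (.inl j)
    | .inr i =>
      if hi : c0 i ∈ (S : Set M) then .inr i
      else .inl (.inr (Classical.choose (hrange i hi)))
  let c : Fin n → M := fun i => if c0 i ∈ (S : Set M) then c0 i else (s0 : M)
  have hcS : ∀ i, c i ∈ (S : Set M) := by
    intro i
    by_cases hi : c0 i ∈ (S : Set M)
    · show (if c0 i ∈ (S : Set M) then c0 i else (s0 : M)) ∈ (S : Set M)
      rw [if_pos hi]; exact hi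
    · show (if c0 i ∈ (S : Set M) then c0 i else (s0 : M)) ∈ (S : Set M)
      rw [if_neg hi]; exact s0.2
  have key0 : ∀ v : Fin l → M,
      (φ.relabel ρ0).Realize (Sum.elim (Sum.elim v a) c) ↔ φ.Realize (Sum.elim v c0) := by
    intro v
    rw [FirstOrder.Language.Formula.realize_relabel]
    apply iff_of_eq
    congr 1
    funext x
    rcases x with j | i
    · rfl
    · show Sum.elim (Sum.elim v a) c (ρ0 (.inr i)) = c0 i
      by_cases hi : c0 i ∈ (S : Set M)
      · have h1 : ρ0 (.inr i) = .inr i := dif_pos hi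
        rw [h1]
        show (if c0 i ∈ (S : Set M) then c0 i else (s0 : M)) = c0 i
        rw [if_pos hi]
      · have h1 : ρ0 (.inr i) = .inl (.inr (Classical.choose (hrange i hi))) := dif_neg hi
        rw [h1]
        exact Classical.choose_spec (hrange i hi)
  exact aux_core hNOP S a b h (φ.relabel ρ0) c hcS
    ((key0 b).mpr hbc0)
    (fun v hv hreal => hnb v hv ((key0 v).mp hreal))
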